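/- Let r, s ≥ 1 be fixed integers and let P(x) = Σ_{j=1}^{r−1} P_{0,r,s,a,j}(x) + Σ_{j=1}^{s−1} (−1)^j P_{0,r,s,b,j}(x), a polynomial of degree ≤ r+s−1 independent of n, where P_{0,r,s,a,j} (resp. P_{0,r,s,b,j}) is the unique polynomial of degree ≤ r+s−1 whose k-th derivative divided by k! equals δ_{kj}/j! at a for k = 0,…,r−1 and vanishes to order s at b (resp. equals δ_{kj}/j! at b for k = 0,…,s−1 and vanishes to order r at a). Then P is nonnegative on [a,b], and for every n ≥ 0 and every quadrature Q_{n,r,s} satisfying the exactness hypothesis with weights λ_0^{(j)}(n), λ_j(n), λ_{n+1}^{(j)}(n), one has Σ_{j=1}^{r−1} λ_0^{(j)}(n) + Σ_{j=1}^{s−1} λ_{n+1}^{(j)}(n) ≤ ∫ P(t) dλ(t). -/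

import Mathlib

open MeasureTheory

/-- The generalized Gauss–Radau/Gauss–Lobatto quadrature
`Q_{n,r,s}(f) = Σ_{j<r} λ₀^{(j)} f^{(j)}(a) + Σ_{j<n} λ_j f(τ_j) + Σ_{j<s} (-1)^j λ_{n+1}^{(j)} f^{(j)}(b)`,
where derivatives are taken within `[a,b]`. -/
noncomputable def quad (a b : ℝ) (n r s : ℕ) (τ w0 wi w1 : ℕ → ℝ) (f : ℝ → ℝ) : ℝ :=
  (∑ j ∈ Finset.range r, w0 j * iteratedDerivWithin j f (Set.Icc a b) a)
  + (∑ j ∈ Finset.range n, wi j * f (τ j))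
  + (∑ j ∈ Finset.range s, (-1 : ℝ) ^ j * w1 j * iteratedDerivWithin j f (Set.Icc a b) b)

namespace BWTB

open Polynomial Finset

lemma iter_eval (k : ℕ) : ∀ (p : Polynomial ℝ),
    iteratedDeriv k (fun t => p.eval t) = fun t => (Polynomial.derivative^[k] p).eval t := by
  induction k with
  | zero => intro p; simp
  | succ k ih =>
    intro p
    rw [iteratedDeriv_succ']
    have h1 : deriv (fun t => p.eval t) = fun t => (Polynomial.derivative p).eval t :=
      funext fun x => Polynomial.deriv p
    rw [h1, ih]
    funext t
    rw [Function.iterate_succ_apply]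

lemma iter_eval_taylor (p : Polynomial ℝ) (k : ℕ) (c : ℝ) :
    iteratedDeriv k (fun t => p.eval t) c = (k.factorial : ℝ) * ((p.taylor c).coeff k) := by
  have := congrFun (iter_eval k p) c
  rw [this, Polynomial.taylor_coeff]
  have h2 : Polynomial.derivative^[k] p = k.factorial • Polynomial.hasseDeriv k p := by
    rw [← Polynomial.factorial_smul_hasseDeriv]; rfl
  rw [h2]
  simp [nsmul_eq_mul]

lemma iterWithin {a b : ℝ} (hab : a < b) (p : Polynomial ℝ) (k : ℕ) :
    ∀ x ∈ Set.Icc a b, iteratedDerivWithin k (fun t => p.eval t) (Set.Icc a b) x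
      = iteratedDeriv k (fun t => p.eval t) x := by
  induction k with
  | zero => intro x hx; simp
  | succ k ih =>
    intro x hx
    rw [iteratedDerivWithin_succ]
    have h1 : Set.EqOn (iteratedDerivWithin k (fun t => p.eval t) (Set.Icc a b))
        (fun t => (Polynomial.derivative^[k] p).eval t) (Set.Icc a b) := by
      intro y hy
      rw [ih y hy, congrFun (iter_eval k p) y]
    rw [derivWithin_congr h1 (h1 hx),
      (Polynomial.differentiableAt _).derivWithin ((uniqueDiffOn_Icc hab) x hx),
      Polynomial.deriv _, congrFun (iter_eval (k+1) p) x, Function.iterate_succ_apply']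

noncomputable def TT (s m : ℕ) : Polynomial ℝ :=
  ∑ i ∈ Finset.range m, C (((s + i - 1).choose i : ℕ) : ℝ) * X ^ i

lemma coeff_TT (s m k : ℕ) :
    (TT s m).coeff k = if k < m then (((s + k - 1).choose k : ℕ) : ℝ) else 0 := by
  rw [TT, finset_sum_coeff]
  simp only [coeff_C_mul, coeff_X_pow, mul_ite, mul_one, mul_zero]
  simp only [eq_comm (a := k)]
  rw [Finset.sum_ite_eq' (Finset.range m) k (fun i => (((s + i - 1).choose i : ℕ) : ℝ))]
  simp [Finset.mem_range]

lemma one_sub_X_mul_TT (s m : ℕ) (hm : 1 ≤ m) :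
    (1 - X) * TT (s + 1) m = TT s m - C (((s + m - 1).choose (m - 1) : ℕ) : ℝ) * X ^ m := by
  apply Polynomial.ext
  intro k
  rw [one_sub_mul, coeff_sub, coeff_sub, coeff_C_mul, coeff_X_pow]
  match k with
  | 0 =>
    rw [mul_coeff_zero, coeff_X_zero, zero_mul, coeff_TT, coeff_TT]
    have h0 : 0 < m := hm
    have h0' : ¬ (0 = m) := by omega
    simp [h0, h0']
  | (k+1) =>
    rw [coeff_X_mul, coeff_TT, coeff_TT, coeff_TT]
    by_cases h1 : k + 1 < m
    · have h2 : k < m := by omega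
      have h3 : ¬ (k + 1 = m) := by omega
      simp only [if_pos h1, if_pos h2, if_neg h3, mul_zero, sub_zero]
      have e1 : s + 1 + (k + 1) - 1 = (s + k) + 1 := by omega
      have e2 : s + 1 + k - 1 = s + k := by omega
      have e3 : s + (k + 1) - 1 = s + k := by omega
      rw [e1, e2, e3, Nat.choose_succ_succ]
      push_cast
      ring
    · by_cases h4 : k + 1 = m
      · have h5 : k < m := by omega
        have h6 : ¬ (k + 1 < m) := by omega
        simp only [if_neg h6, if_pos h5, if_pos h4, mul_one]
        have e1 : s + 1 + k - 1 = s + m - 1 := by omega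
        have e2 : k = m - 1 := by omega
        rw [e1, e2]
      · have h6 : ¬ (k + 1 < m) := by omega
        by_cases h7 : k < m
        · omega
        · simp [h6, h7, h4]

lemma key (s m : ℕ) (hm : 1 ≤ m) : ∀ k < m,
    ((1 - X : Polynomial ℝ) ^ s * TT s m).coeff k = if k = 0 then 1 else 0 := by
  induction s with
  | zero =>
    intro k hk
    rw [pow_zero, one_mul, coeff_TT, if_pos hk]
    match k with
    | 0 => simp
    | (k+1) =>
      have : (0 + (k+1) - 1).choose (k+1) = 0 := Nat.choose_eq_zero_of_lt (by omega)
      simp [this]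
  | succ s ih =>
    intro k hk
    have h1 : (1 - X : Polynomial ℝ) ^ (s+1) * TT (s+1) m
        = (1 - X) ^ s * TT s m
          - C (((s + m - 1).choose (m - 1) : ℕ) : ℝ) * ((1 - X) ^ s * X ^ m) := by
      rw [pow_succ, mul_assoc, one_sub_X_mul_TT s m hm]
      ring
    rw [h1, coeff_sub, ih k hk, coeff_C_mul]
    have h2 : ((1 - X : Polynomial ℝ) ^ s * X ^ m).coeff k = 0 := by
      refine Polynomial.X_pow_dvd_iff.mp ⟨(1 - X) ^ s, by ring⟩ k hk
    rw [h2, mul_zero, sub_zero]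

lemma coeff_aeval_C_mul_X (c : ℝ) (p : Polynomial ℝ) (m : ℕ) :
    (Polynomial.aeval (C c * X) p).coeff m = c ^ m * p.coeff m := by
  induction p using Polynomial.induction_on' with
  | add p q hp hq => simp [hp, hq, mul_add]
  | monomial n a =>
    rw [Polynomial.aeval_monomial]
    simp only [mul_pow, ← Polynomial.C_pow, Polynomial.coeff_monomial]
    have : (algebraMap ℝ (Polynomial ℝ)) a = C a := rfl
    rw [this, show C a * (C (c^n) * X^n) = C (a * c^n) * X^n by rw [C_mul]; ring]
    rw [coeff_C_mul, coeff_X_pow]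
    by_cases h : m = n
    · subst h; simp [mul_comm]
    · simp [h, Ne.symm h]

noncomputable def AP (a b : ℝ) (r s j : ℕ) : Polynomial ℝ :=
  C (1 / (j.factorial * (b - a) ^ s)) * (X - C a) ^ j *
    ((C b - X) ^ s *
      ∑ i ∈ Finset.range (r - j), C ((((s + i - 1).choose i : ℕ) : ℝ) / (b - a) ^ i) * (X - C a) ^ i)

lemma W_eq (h : ℝ) (hd : h ≠ 0) (s M : ℕ) :
    ((C h - X : Polynomial ℝ) ^ s *
      ∑ i ∈ Finset.range M, C ((((s + i - 1).choose i : ℕ) : ℝ) / h ^ i) * X ^ i)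
    = C (h ^ s) * Polynomial.aeval (C h⁻¹ * X) ((1 - X) ^ s * TT s M) := by
  have hCh : (C h : Polynomial ℝ) * C h⁻¹ = 1 := by
    rw [← C_mul, mul_inv_cancel₀ hd, C_1]
  have h1 : (C h - X : Polynomial ℝ) = C h * (1 - C h⁻¹ * X) := by
    rw [mul_sub, mul_one, ← mul_assoc, hCh, one_mul]
  have h2 : Polynomial.aeval (C h⁻¹ * X) (TT s M)
      = ∑ i ∈ Finset.range M, C ((((s + i - 1).choose i : ℕ) : ℝ) / h ^ i) * X ^ i := by
    rw [TT, map_sum]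
    refine Finset.sum_congr rfl (fun i _ => ?_)
    rw [map_mul, map_pow, Polynomial.aeval_C, Polynomial.aeval_X]
    have : (algebraMap ℝ (Polynomial ℝ)) (((s + i - 1).choose i : ℕ) : ℝ)
        = C (((s + i - 1).choose i : ℕ) : ℝ) := rfl
    rw [this, mul_pow, ← C_pow, div_eq_mul_inv, ← inv_pow, C_mul]
    ring
  simp only [map_mul, map_pow, map_sub, map_one, Polynomial.aeval_X]
  rw [h2, h1, mul_pow, ← C_pow]
  ring

lemma W_coeff (h : ℝ) (hd : h ≠ 0) (s M : ℕ) (hM : 1 ≤ M) : ∀ m < M,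
    ((C h - X : Polynomial ℝ) ^ s *
      ∑ i ∈ Finset.range M, C ((((s + i - 1).choose i : ℕ) : ℝ) / h ^ i) * X ^ i).coeff m
    = if m = 0 then h ^ s else 0 := by
  intro m hm
  rw [W_eq h hd s M, coeff_C_mul, coeff_aeval_C_mul_X, key s M hM m hm]
  by_cases h0 : m = 0 <;> simp [h0]

lemma AP_taylor_a (a b : ℝ) (hd : b - a ≠ 0) (r s j : ℕ) (hjr : j < r) :
    ∀ k < r, ((AP a b r s j).taylor a).coeff k
      = (if k = j then 1 else 0) / (j.factorial : ℝ) := by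
  have ht : (AP a b r s j).taylor a
      = (C (b - a) - X) ^ s *
          (∑ i ∈ Finset.range (r - j),
            C ((((s + i - 1).choose i : ℕ) : ℝ) / (b - a) ^ i) * X ^ i)
        * X ^ j * C (1 / (j.factorial * (b - a) ^ s)) := by
    rw [taylor_apply, AP]
    simp only [Polynomial.sum_comp, mul_comp, pow_comp, sub_comp, X_comp, C_comp,
      add_sub_cancel_right]
    have : (C b - (X + C a) : Polynomial ℝ) = C (b - a) - X := by
      rw [C_sub]; ring
    rw [this]
    ring
  intro k hk
  rw [ht, coeff_mul_C, coeff_mul_X_pow']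
  by_cases hkj : j ≤ k
  · have hlt : k - j < r - j := by omega
    rw [if_pos hkj, W_coeff (b - a) hd s (r - j) (by omega) (k - j) hlt]
    by_cases h0 : k = j
    · have : k - j = 0 := by omega
      rw [if_pos h0, this, if_pos rfl]
      field_simp
    · have : ¬ (k - j = 0) := by omega
      rw [if_neg h0, if_neg this, zero_mul, zero_div]
  · rw [if_neg hkj, zero_mul, if_neg (by omega), zero_div]

lemma AP_taylor_b (a b : ℝ) (r s j : ℕ) :
    ∀ k < s, ((AP a b r s j).taylor b).coeff k = 0 := by
  intro k hk
  refine Polynomial.X_pow_dvd_iff.mp ?_ k hk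
  refine ⟨C (1 / (j.factorial * (b - a) ^ s)) * (X + C (b - a)) ^ j *
    (C ((-1 : ℝ)) ^ s *
      ∑ i ∈ Finset.range (r - j),
        C ((((s + i - 1).choose i : ℕ) : ℝ) / (b - a) ^ i) * (X + C (b - a)) ^ i), ?_⟩
  rw [taylor_apply, AP]
  simp only [Polynomial.sum_comp, mul_comp, pow_comp, sub_comp, X_comp, C_comp]
  have h1 : (X + C b - C a : Polynomial ℝ) = X + C (b - a) := by rw [C_sub]; ring
  have h2 : (C b - (X + C b) : Polynomial ℝ) = -X := by ring
  have h3 : (-X : Polynomial ℝ) ^ s = C (-1 : ℝ) ^ s * X ^ s := by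
    rw [← mul_pow]; congr 1; simp
  rw [h1, h2, h3]
  ring

lemma AP_natDegree (a b : ℝ) (r s j : ℕ) (hjr : j < r) :
    (AP a b r s j).natDegree + 1 ≤ r + s := by
  have h1 : ((X - C a : Polynomial ℝ) ^ j).natDegree ≤ j := by
    refine natDegree_pow_le.trans ?_
    rw [natDegree_X_sub_C]; omega
  have h2 : ((C b - X : Polynomial ℝ) ^ s).natDegree ≤ s := by
    refine natDegree_pow_le.trans ?_
    have : (C b - X : Polynomial ℝ).natDegree ≤ 1 :=
      (natDegree_sub_le _ _).trans (by simp)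
    nlinarith [this]
  have h3 : (∑ i ∈ Finset.range (r - j),
      C ((((s + i - 1).choose i : ℕ) : ℝ) / (b - a) ^ i) * (X - C a : Polynomial ℝ) ^ i).natDegree
      ≤ r - j - 1 := by
    refine natDegree_sum_le_of_forall_le _ _ (fun i hi => ?_)
    refine (natDegree_C_mul_le _ _).trans (natDegree_pow_le.trans ?_)
    rw [natDegree_X_sub_C]
    simp only [Finset.mem_range] at hi
    omega
  have h4 := natDegree_mul_le (p := C (1 / (j.factorial * (b - a) ^ s)) * (X - C a) ^ j)
    (q := (C b - X : Polynomial ℝ) ^ s *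
      ∑ i ∈ Finset.range (r - j), C ((((s + i - 1).choose i : ℕ) : ℝ) / (b - a) ^ i) * (X - C a) ^ i)
  have h5 := natDegree_mul_le (p := C (1 / (j.factorial * (b - a) ^ s)))
    (q := (X - C a : Polynomial ℝ) ^ j)
  have h6 := natDegree_mul_le (p := (C b - X : Polynomial ℝ) ^ s)
    (q := ∑ i ∈ Finset.range (r - j),
      C ((((s + i - 1).choose i : ℕ) : ℝ) / (b - a) ^ i) * (X - C a : Polynomial ℝ) ^ i)
  rw [AP]
  have h7 : (C (1 / (j.factorial * (b - a) ^ s)) : Polynomial ℝ).natDegree = 0 := natDegree_C _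
  omega

lemma AP_eval_nonneg (a b x : ℝ) (hd : b - a ≠ 0) (r s j : ℕ)
    (hx1 : 0 ≤ (x - a) / (b - a)) (hx2 : 0 ≤ (b - x) / (b - a)) :
    0 ≤ (AP a b r s j).eval x / (b - a) ^ j := by
  have hsum : (∑ i ∈ Finset.range (r - j),
      C ((((s + i - 1).choose i : ℕ) : ℝ) / (b - a) ^ i) * (X - C a : Polynomial ℝ) ^ i).eval x
      = ∑ i ∈ Finset.range (r - j), (((s + i - 1).choose i : ℕ) : ℝ) * ((x - a) / (b - a)) ^ i := by
    simp only [eval_finset_sum, eval_mul, eval_pow, eval_sub, eval_C, eval_X]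
    refine Finset.sum_congr rfl (fun i _ => ?_)
    rw [div_pow]
    ring
  have hfac : (0:ℝ) < (j.factorial : ℝ) := by
    exact_mod_cast Nat.factorial_pos j
  have : (AP a b r s j).eval x / (b - a) ^ j
      = (1 / (j.factorial : ℝ)) * ((x - a) / (b - a)) ^ j * ((b - x) / (b - a)) ^ s *
        ∑ i ∈ Finset.range (r - j), (((s + i - 1).choose i : ℕ) : ℝ) * ((x - a) / (b - a)) ^ i := by
    rw [AP]
    simp only [eval_mul, eval_pow, eval_sub, eval_C, eval_X]
    rw [hsum, div_pow, div_pow]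
    field_simp
  rw [this]
  have hS : 0 ≤ ∑ i ∈ Finset.range (r - j),
      (((s + i - 1).choose i : ℕ) : ℝ) * ((x - a) / (b - a)) ^ i := by
    refine Finset.sum_nonneg (fun i _ => mul_nonneg (by positivity) (pow_nonneg hx1 i))
  positivity

lemma taylor_comp_sub (c : ℝ) (p : Polynomial ℝ) :
    ((p.taylor c) : Polynomial ℝ).comp (X - C c) = p := by
  rw [taylor_apply, comp_assoc]
  simp

lemma dvd_of_taylor_coeff_zero (c : ℝ) (p : Polynomial ℝ) (m : ℕ)
    (h : ∀ k < m, (p.taylor c).coeff k = 0) : (X - C c) ^ m ∣ p := by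
  obtain ⟨u, hu⟩ : (X : Polynomial ℝ) ^ m ∣ p.taylor c := Polynomial.X_pow_dvd_iff.mpr h
  refine ⟨u.comp (X - C c), ?_⟩
  conv_lhs => rw [← taylor_comp_sub c p]
  rw [hu, mul_comp, pow_comp, X_comp]

lemma uniq (a b : ℝ) (hab : a ≠ b) (r s : ℕ) (p q : Polynomial ℝ)
    (hp : p.natDegree + 1 ≤ r + s) (hq : q.natDegree + 1 ≤ r + s)
    (ha : ∀ k < r, (p.taylor a).coeff k = (q.taylor a).coeff k)
    (hb : ∀ k < s, (p.taylor b).coeff k = (q.taylor b).coeff k) : p = q := by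
  set d := p - q with hd
  have hda : (X - C a) ^ r ∣ d := by
    refine dvd_of_taylor_coeff_zero a d r (fun k hk => ?_)
    rw [hd, map_sub, coeff_sub, ha k hk, sub_self]
  have hdb : (X - C b) ^ s ∣ d := by
    refine dvd_of_taylor_coeff_zero b d s (fun k hk => ?_)
    rw [hd, map_sub, coeff_sub, hb k hk, sub_self]
  have hcop : IsCoprime ((X - C a : Polynomial ℝ) ^ r) ((X - C b) ^ s) := by
    refine IsCoprime.pow ?_
    exact Polynomial.isCoprime_X_sub_C_of_isUnit_sub (by simpa using (sub_ne_zero_of_ne hab).isUnit)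
  have hdvd : (X - C a) ^ r * (X - C b) ^ s ∣ d := hcop.mul_dvd hda hdb
  by_contra hne
  have hd0 : d ≠ 0 := sub_ne_zero_of_ne hne
  have hdeg := Polynomial.natDegree_le_of_dvd hdvd hd0
  have h1 : ((X - C a : Polynomial ℝ) ^ r * (X - C b) ^ s).natDegree = r + s := by
    rw [natDegree_mul (pow_ne_zero _ (X_sub_C_ne_zero a)) (pow_ne_zero _ (X_sub_C_ne_zero b)),
      natDegree_pow, natDegree_pow, natDegree_X_sub_C, natDegree_X_sub_C]
    ring
  have h2 : d.natDegree ≤ max p.natDegree q.natDegree := natDegree_sub_le p q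
  omega

lemma ae_mem_Icc {a b : ℝ} (μ : Measure ℝ) (hsupp : μ (Set.Icc a b)ᶜ = 0) :
    ∀ᵐ x ∂μ, x ∈ Set.Icc a b := by
  rw [MeasureTheory.ae_iff]
  simpa [Set.compl_def] using hsupp

lemma integrable_poly {a b : ℝ} (μ : Measure ℝ) [IsFiniteMeasure μ]
    (hsupp : μ (Set.Icc a b)ᶜ = 0) (p : Polynomial ℝ) :
    Integrable (fun t => p.eval t) μ := by
  obtain ⟨M, hM⟩ := IsCompact.exists_bound_of_continuousOn (isCompact_Icc (a := a) (b := b))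
    (p.continuous.continuousOn)
  refine Integrable.mono' (integrable_const M) (p.continuous.aestronglyMeasurable) ?_
  filter_upwards [ae_mem_Icc μ hsupp] with x hx
  exact hM x hx

lemma integral_nonneg_poly {a b : ℝ} (μ : Measure ℝ)
    (hsupp : μ (Set.Icc a b)ᶜ = 0) (p : Polynomial ℝ)
    (hnn : ∀ x ∈ Set.Icc a b, 0 ≤ p.eval x) :
    0 ≤ ∫ t, p.eval t ∂μ := by
  refine integral_nonneg_of_ae ?_
  filter_upwards [ae_mem_Icc μ hsupp] with x hx
  exact hnn x hx

end BWTB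

open BWTB Polynomial in
theorem boundary_weights_tail_bound
    (a b : ℝ) (hab : a < b)
    (μ : Measure ℝ) [IsFiniteMeasure μ]
    (hsupp : μ (Set.Icc a b)ᶜ = 0)
    (hinf : {x | x ∈ Set.Ioo a b ∧ ∀ ε > 0, 0 < μ (Set.Ioo (x - ε) (x + ε))}.Infinite)
    (r s : ℕ) (hr : 1 ≤ r) (hs : 1 ≤ s)
    (pA pB : ℕ → Polynomial ℝ)
    (hpAdeg : ∀ j, 1 ≤ j → j ≤ r - 1 → (pA j).natDegree + 1 ≤ r + s)
    (hpAa : ∀ j, 1 ≤ j → j ≤ r - 1 → ∀ k < r,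
      iteratedDeriv k (fun t => (pA j).eval t) a / (k.factorial : ℝ)
        = (if k = j then 1 else 0) / (j.factorial : ℝ))
    (hpAb : ∀ j, 1 ≤ j → j ≤ r - 1 → ∀ k < s,
      iteratedDeriv k (fun t => (pA j).eval t) b = 0)
    (hpBdeg : ∀ j, 1 ≤ j → j ≤ s - 1 → (pB j).natDegree + 1 ≤ r + s)
    (hpBb : ∀ j, 1 ≤ j → j ≤ s - 1 → ∀ k < s,
      iteratedDeriv k (fun t => (pB j).eval t) b / (k.factorial : ℝ)
        = (if k = j then 1 else 0) / (j.factorial : ℝ))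
    (hpBa : ∀ j, 1 ≤ j → j ≤ s - 1 → ∀ k < r,
      iteratedDeriv k (fun t => (pB j).eval t) a = 0) :
    (∀ x ∈ Set.Icc a b,
      0 ≤ (∑ j ∈ Finset.Ico 1 r, (pA j).eval x)
          + (∑ j ∈ Finset.Ico 1 s, (-1 : ℝ) ^ j * (pB j).eval x)) ∧
    (∀ n : ℕ, ∀ τ w0 wi w1 : ℕ → ℝ,
      (∀ j < n, τ j ∈ Set.Ioo a b) →
      (∀ i j, i < j → j < n → τ i < τ j) →
      (∀ p : Polynomial ℝ, p.natDegree + 1 ≤ 2 * n + r + s →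
        quad a b n r s τ w0 wi w1 (fun t => p.eval t) = ∫ t, p.eval t ∂μ) →
      (∑ j ∈ Finset.Ico 1 r, w0 j) + (∑ j ∈ Finset.Ico 1 s, w1 j)
        ≤ ∫ t, ((∑ j ∈ Finset.Ico 1 r, (pA j).eval t)
            + (∑ j ∈ Finset.Ico 1 s, (-1 : ℝ) ^ j * (pB j).eval t)) ∂μ) := by
  have hba : b - a ≠ 0 := sub_ne_zero_of_ne hab.ne'
  have hba' : (0:ℝ) < b - a := sub_pos.mpr hab
  have hfkne : ∀ k : ℕ, ((k.factorial : ℕ) : ℝ) ≠ 0 := fun k => by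
    exact_mod_cast k.factorial_ne_zero
  -- hypotheses in Taylor-coefficient form
  have hA_a : ∀ j, 1 ≤ j → j < r → ∀ k < r,
      ((pA j).taylor a).coeff k = (if k = j then 1 else 0) / (j.factorial : ℝ) := by
    intro j h1 h2 k hk
    have h3 := hpAa j h1 (by omega) k hk
    rw [iter_eval_taylor, mul_div_cancel_left₀ _ (hfkne k)] at h3
    exact h3
  have hA_b : ∀ j, 1 ≤ j → j < r → ∀ k < s, ((pA j).taylor b).coeff k = 0 := by
    intro j h1 h2 k hk
    have h3 := hpAb j h1 (by omega) k hk
    rw [iter_eval_taylor] at h3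
    exact (mul_eq_zero.mp h3).resolve_left (hfkne k)
  have hB_b : ∀ j, 1 ≤ j → j < s → ∀ k < s,
      ((pB j).taylor b).coeff k = (if k = j then 1 else 0) / (j.factorial : ℝ) := by
    intro j h1 h2 k hk
    have h3 := hpBb j h1 (by omega) k hk
    rw [iter_eval_taylor, mul_div_cancel_left₀ _ (hfkne k)] at h3
    exact h3
  have hB_a : ∀ j, 1 ≤ j → j < s → ∀ k < r, ((pB j).taylor a).coeff k = 0 := by
    intro j h1 h2 k hk
    have h3 := hpBa j h1 (by omega) k hk
    rw [iter_eval_taylor] at h3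
    exact (mul_eq_zero.mp h3).resolve_left (hfkne k)
  -- identification with the explicit polynomials
  have hApA : ∀ j, 1 ≤ j → j < r → pA j = AP a b r s j := by
    intro j h1 h2
    refine uniq a b hab.ne r s _ _ (hpAdeg j h1 (by omega)) (AP_natDegree a b r s j h2) ?_ ?_
    · intro k hk; rw [hA_a j h1 h2 k hk, AP_taylor_a a b hba r s j h2 k hk]
    · intro k hk; rw [hA_b j h1 h2 k hk, AP_taylor_b a b r s j k hk]
  have hab2 : a - b ≠ 0 := fun hc => hba (by linarith)
  have hBpB : ∀ j, 1 ≤ j → j < s → pB j = AP b a s r j := by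
    intro j h1 h2
    refine uniq b a hab.ne' s r _ _ (by have := hpBdeg j h1 (by omega); omega)
      (by have := AP_natDegree b a s r j h2; omega) ?_ ?_
    · intro k hk; rw [hB_b j h1 h2 k hk, AP_taylor_a b a hab2 s r j h2 k hk]
    · intro k hk; rw [hB_a j h1 h2 k hk, AP_taylor_b b a s r j k hk]
  -- pointwise nonnegativity
  have hpAnn : ∀ x ∈ Set.Icc a b, ∀ j, 1 ≤ j → j < r → 0 ≤ (pA j).eval x := by
    intro x hx j h1 h2
    rw [hApA j h1 h2]
    have hx1 : 0 ≤ (x - a)/(b - a) := div_nonneg (by linarith [hx.1]) hba'.le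
    have hx2 : 0 ≤ (b - x)/(b - a) := div_nonneg (by linarith [hx.2]) hba'.le
    have h4 := AP_eval_nonneg a b x hba r s j hx1 hx2
    have h5 : (AP a b r s j).eval x = ((AP a b r s j).eval x / (b-a)^j) * (b-a)^j :=
      (div_mul_cancel₀ _ (pow_ne_zero j hba)).symm
    rw [h5]
    exact mul_nonneg h4 (by positivity)
  have hpBnn : ∀ x ∈ Set.Icc a b, ∀ j, 1 ≤ j → j < s → 0 ≤ (-1:ℝ)^j * (pB j).eval x := by
    intro x hx j h1 h2
    rw [hBpB j h1 h2]
    have hx1 : 0 ≤ (x - b)/(a - b) := by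
      rw [show x - b = -(b - x) by ring, show a - b = -(b - a) by ring, neg_div_neg_eq]
      exact div_nonneg (by linarith [hx.2]) hba'.le
    have hx2 : 0 ≤ (a - x)/(a - b) := by
      rw [show a - x = -(x - a) by ring, show a - b = -(b - a) by ring, neg_div_neg_eq]
      exact div_nonneg (by linarith [hx.1]) hba'.le
    have h4 := AP_eval_nonneg b a x hab2 s r j hx1 hx2
    have h6 : ((AP b a s r j).eval x / (a-b)^j) * ((a-b)^j * (-1:ℝ)^j)
        = (-1:ℝ)^j * (AP b a s r j).eval x := by
      rw [← mul_assoc, div_mul_cancel₀ _ (pow_ne_zero j hab2), mul_comm]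
    have h7 : 0 ≤ (a-b)^j * (-1:ℝ)^j := by
      rw [← mul_pow, show ((a:ℝ)-b) * (-1) = b - a by ring]
      positivity
    rw [← h6]
    exact mul_nonneg h4 h7
  have part1 : ∀ x ∈ Set.Icc a b,
      0 ≤ (∑ j ∈ Finset.Ico 1 r, (pA j).eval x)
        + (∑ j ∈ Finset.Ico 1 s, (-1 : ℝ) ^ j * (pB j).eval x) := by
    intro x hx
    have h1 : 0 ≤ ∑ j ∈ Finset.Ico 1 r, (pA j).eval x :=
      Finset.sum_nonneg fun j hj => by
        rw [Finset.mem_Ico] at hj; exact hpAnn x hx j hj.1 hj.2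
    have h2 : 0 ≤ ∑ j ∈ Finset.Ico 1 s, (-1:ℝ)^j * (pB j).eval x :=
      Finset.sum_nonneg fun j hj => by
        rw [Finset.mem_Ico] at hj; exact hpBnn x hx j hj.1 hj.2
    linarith
  refine ⟨part1, ?_⟩
  intro n τ w0 wi w1 hτ horder hexact
  have haI : a ∈ Set.Icc a b := Set.left_mem_Icc.mpr hab.le
  have hbI : b ∈ Set.Icc a b := Set.right_mem_Icc.mpr hab.le
  -- interior weights are nonnegative
  have hwi : ∀ i, i < n → 0 ≤ wi i := by
    intro i hi
    set Rp : Polynomial ℝ := ∏ k ∈ (Finset.range n).erase i, (X - C (τ k))^2 with hRp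
    set q : Polynomial ℝ := (X - C a)^r * ((C b - X)^s * Rp) with hq2
    have tpow : ∀ (c:ℝ) (p : Polynomial ℝ) (m : ℕ), (p^m).taylor c = (p.taylor c)^m :=
      fun c p m => by simp [Polynomial.taylor_apply, Polynomial.pow_comp]
    have hqdeg : q.natDegree + 1 ≤ 2*n + r + s := by
      have d1 : ((X - C a : Polynomial ℝ)^r).natDegree ≤ r := by
        refine natDegree_pow_le.trans ?_; rw [natDegree_X_sub_C]; omega
      have d2 : ((C b - X : Polynomial ℝ)^s).natDegree ≤ s := by
        refine natDegree_pow_le.trans ?_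
        have : (C b - X : Polynomial ℝ).natDegree ≤ 1 := (natDegree_sub_le _ _).trans (by simp)
        nlinarith [this]
      have d3 : Rp.natDegree ≤ 2 * (n - 1) := by
        rw [hRp]
        refine (natDegree_prod_le _ _).trans ?_
        have : ∀ k ∈ (Finset.range n).erase i, ((X - C (τ k) : Polynomial ℝ)^2).natDegree ≤ 2 := by
          intro k _
          refine natDegree_pow_le.trans ?_; rw [natDegree_X_sub_C]
        refine (Finset.sum_le_sum this).trans ?_
        rw [Finset.sum_const, Finset.card_erase_of_mem (Finset.mem_range.mpr hi),
          Finset.card_range, smul_eq_mul]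
        omega
      have d4 := natDegree_mul_le (p := (X - C a : Polynomial ℝ)^r)
        (q := (C b - X : Polynomial ℝ)^s * Rp)
      have d5 := natDegree_mul_le (p := (C b - X : Polynomial ℝ)^s) (q := Rp)
      rw [hq2]
      omega
    have hqa : ∀ k < r, (q.taylor a).coeff k = 0 := by
      intro k hk
      refine Polynomial.X_pow_dvd_iff.mp ?_ k hk
      refine ⟨((C b - X)^s * Rp).taylor a, ?_⟩
      rw [hq2, Polynomial.taylor_mul, tpow]
      congr 1
      rw [Polynomial.taylor_apply]
      simp
    have hqb : ∀ k < s, (q.taylor b).coeff k = 0 := by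
      intro k hk
      refine Polynomial.X_pow_dvd_iff.mp ?_ k hk
      refine ⟨((X - C a : Polynomial ℝ)^r).taylor b * (C (-1:ℝ)^s * Rp.taylor b), ?_⟩
      rw [hq2, Polynomial.taylor_mul, Polynomial.taylor_mul, tpow, tpow]
      have h2 : (C b - X : Polynomial ℝ).taylor b = -X := by
        rw [Polynomial.taylor_apply]
        simp only [Polynomial.sub_comp, Polynomial.C_comp, Polynomial.X_comp]
        ring
      have h3 : (-X : Polynomial ℝ)^s = C (-1:ℝ)^s * X^s := by
        rw [← mul_pow]; congr 1; simp
      rw [h2, h3]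
      ring
    have hqτ : ∀ k, k < n → k ≠ i → q.eval (τ k) = 0 := by
      intro k hk hki
      rw [hq2]
      simp only [Polynomial.eval_mul]
      have : Rp.eval (τ k) = 0 := by
        rw [hRp, Polynomial.eval_prod]
        refine Finset.prod_eq_zero (Finset.mem_erase.mpr ⟨hki, Finset.mem_range.mpr hk⟩) ?_
        simp
      rw [this]
      ring
    have hqnn : ∀ x ∈ Set.Icc a b, 0 ≤ q.eval x := by
      intro x hx
      rw [hq2]
      simp only [Polynomial.eval_mul, Polynomial.eval_pow, Polynomial.eval_sub,
        Polynomial.eval_X, Polynomial.eval_C]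
      refine mul_nonneg (pow_nonneg (by linarith [hx.1]) r)
        (mul_nonneg (pow_nonneg (by linarith [hx.2]) s) ?_)
      rw [hRp, Polynomial.eval_prod]
      refine Finset.prod_nonneg fun k _ => ?_
      simp only [Polynomial.eval_pow, Polynomial.eval_sub, Polynomial.eval_X, Polynomial.eval_C]
      positivity
    have hqpos : 0 < q.eval (τ i) := by
      have hτi := hτ i hi
      rw [hq2]
      simp only [Polynomial.eval_mul, Polynomial.eval_pow, Polynomial.eval_sub,
        Polynomial.eval_X, Polynomial.eval_C]
      refine mul_pos (pow_pos (by linarith [hτi.1]) r)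
        (mul_pos (pow_pos (by linarith [hτi.2]) s) ?_)
      rw [hRp, Polynomial.eval_prod]
      refine Finset.prod_pos fun k hk => ?_
      rw [Finset.mem_erase, Finset.mem_range] at hk
      simp only [Polynomial.eval_pow, Polynomial.eval_sub, Polynomial.eval_X, Polynomial.eval_C]
      have hne : τ i ≠ τ k := by
        rcases lt_trichotomy k i with h | h | h
        · exact (horder k i h hi).ne'
        · exact absurd h hk.1
        · exact (horder i k h hk.2).ne
      exact pow_two_pos_of_ne_zero (sub_ne_zero_of_ne hne)
    have hqe := hexact q hqdeg
    unfold quad at hqe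
    have hz0 : ∑ k ∈ Finset.range r,
        w0 k * iteratedDerivWithin k (fun t => q.eval t) (Set.Icc a b) a = 0 :=
      Finset.sum_eq_zero fun k hk => by
        rw [Finset.mem_range] at hk
        rw [iterWithin hab q k a haI, iter_eval_taylor, hqa k hk]
        ring
    have hz2 : ∑ k ∈ Finset.range s,
        (-1:ℝ)^k * w1 k * iteratedDerivWithin k (fun t => q.eval t) (Set.Icc a b) b = 0 :=
      Finset.sum_eq_zero fun k hk => by
        rw [Finset.mem_range] at hk
        rw [iterWithin hab q k b hbI, iter_eval_taylor, hqb k hk]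
        ring
    have hzmid : ∑ k ∈ Finset.range n, wi k * q.eval (τ k) = wi i * q.eval (τ i) :=
      Finset.sum_eq_single_of_mem i (Finset.mem_range.mpr hi) fun k hk hki => by
        rw [hqτ k (Finset.mem_range.mp hk) hki]
        ring
    rw [hz0, hz2, hzmid] at hqe
    have hint2 : 0 ≤ ∫ t, q.eval t ∂μ := integral_nonneg_poly μ hsupp q hqnn
    nlinarith [hqpos, hint2, hqe]
  -- the combined polynomial
  set PP : Polynomial ℝ := (∑ j ∈ Finset.Ico 1 r, pA j)
      + ∑ j ∈ Finset.Ico 1 s, C ((-1:ℝ)^j) * pB j with hPP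
  have hevalPP : ∀ t : ℝ, PP.eval t
      = (∑ j ∈ Finset.Ico 1 r, (pA j).eval t)
        + ∑ j ∈ Finset.Ico 1 s, (-1:ℝ)^j * (pB j).eval t := by
    intro t
    simp [hPP, Polynomial.eval_finset_sum]
  have hdegPP : PP.natDegree + 1 ≤ 2*n + r + s := by
    have d1 : (∑ j ∈ Finset.Ico 1 r, pA j).natDegree ≤ r + s - 1 :=
      natDegree_sum_le_of_forall_le _ _ fun j hj => by
        rw [Finset.mem_Ico] at hj
        have := hpAdeg j hj.1 (by omega)
        omega
    have d2 : (∑ j ∈ Finset.Ico 1 s, C ((-1:ℝ)^j) * pB j).natDegree ≤ r + s - 1 :=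
      natDegree_sum_le_of_forall_le _ _ fun j hj => by
        rw [Finset.mem_Ico] at hj
        refine (natDegree_C_mul_le _ _).trans ?_
        have := hpBdeg j hj.1 (by omega)
        omega
    have d3 := natDegree_add_le (∑ j ∈ Finset.Ico 1 r, pA j)
      (∑ j ∈ Finset.Ico 1 s, C ((-1:ℝ)^j) * pB j)
    rw [hPP]
    omega
  -- Taylor coefficients of PP
  have hca : ∀ k, k < r → (PP.taylor a).coeff k
      = if 1 ≤ k then 1/(k.factorial:ℝ) else 0 := by
    intro k hk
    rw [hPP, map_add, map_sum, map_sum, Polynomial.coeff_add,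
      Polynomial.finset_sum_coeff, Polynomial.finset_sum_coeff]
    have e1 : ∑ j ∈ Finset.Ico 1 r, (((pA j).taylor a)).coeff k
        = ∑ j ∈ Finset.Ico 1 r, (if k = j then 1/(j.factorial:ℝ) else 0) := by
      refine Finset.sum_congr rfl fun j hj => ?_
      rw [Finset.mem_Ico] at hj
      rw [hA_a j hj.1 hj.2 k hk]
      split_ifs <;> simp
    have e2 : ∑ j ∈ Finset.Ico 1 s, (((C ((-1:ℝ)^j) * pB j).taylor a)).coeff k = 0 :=
      Finset.sum_eq_zero fun j hj => by
        rw [Finset.mem_Ico] at hj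
        rw [Polynomial.taylor_mul, Polynomial.taylor_C, Polynomial.coeff_C_mul,
          hB_a j hj.1 hj.2 k hk, mul_zero]
    rw [e1, e2, add_zero, Finset.sum_ite_eq (Finset.Ico 1 r) k (fun j => 1/(j.factorial:ℝ))]
    by_cases h1k : 1 ≤ k
    · rw [if_pos (Finset.mem_Ico.mpr ⟨h1k, hk⟩), if_pos h1k]
    · rw [if_neg (fun hc => h1k (Finset.mem_Ico.mp hc).1), if_neg h1k]
  have hcb : ∀ k, k < s → (PP.taylor b).coeff k
      = if 1 ≤ k then (-1:ℝ)^k/(k.factorial:ℝ) else 0 := by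
    intro k hk
    rw [hPP, map_add, map_sum, map_sum, Polynomial.coeff_add,
      Polynomial.finset_sum_coeff, Polynomial.finset_sum_coeff]
    have e1 : ∑ j ∈ Finset.Ico 1 r, (((pA j).taylor b)).coeff k = 0 :=
      Finset.sum_eq_zero fun j hj => by
        rw [Finset.mem_Ico] at hj
        exact hA_b j hj.1 hj.2 k hk
    have e2 : ∑ j ∈ Finset.Ico 1 s, (((C ((-1:ℝ)^j) * pB j).taylor b)).coeff k
        = ∑ j ∈ Finset.Ico 1 s, (if k = j then (-1:ℝ)^j/(j.factorial:ℝ) else 0) := by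
      refine Finset.sum_congr rfl fun j hj => ?_
      rw [Finset.mem_Ico] at hj
      rw [Polynomial.taylor_mul, Polynomial.taylor_C, Polynomial.coeff_C_mul,
        hB_b j hj.1 hj.2 k hk]
      split_ifs <;> simp [div_eq_mul_inv]
    rw [e1, e2, zero_add,
      Finset.sum_ite_eq (Finset.Ico 1 s) k (fun j => (-1:ℝ)^j/(j.factorial:ℝ))]
    by_cases h1k : 1 ≤ k
    · rw [if_pos (Finset.mem_Ico.mpr ⟨h1k, hk⟩), if_pos h1k]
    · rw [if_neg (fun hc => h1k (Finset.mem_Ico.mp hc).1), if_neg h1k]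
  -- evaluate the quadrature at PP
  have hqe := hexact PP hdegPP
  unfold quad at hqe
  have hS0 : ∑ k ∈ Finset.range r,
      w0 k * iteratedDerivWithin k (fun t => PP.eval t) (Set.Icc a b) a
      = ∑ k ∈ Finset.Ico 1 r, w0 k := by
    have e1 : ∀ k ∈ Finset.range r,
        w0 k * iteratedDerivWithin k (fun t => PP.eval t) (Set.Icc a b) a
        = if 1 ≤ k then w0 k else 0 := by
      intro k hk
      rw [Finset.mem_range] at hk
      rw [iterWithin hab PP k a haI, iter_eval_taylor, hca k hk]
      split_ifs with h1
      · rw [mul_one_div, div_self (hfkne k), mul_one]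
      · simp
    rw [Finset.sum_congr rfl e1, ← Finset.sum_filter]
    congr 1
    ext k
    simp only [Finset.mem_filter, Finset.mem_range, Finset.mem_Ico]
    omega
  have hS2 : ∑ k ∈ Finset.range s,
      (-1:ℝ)^k * w1 k * iteratedDerivWithin k (fun t => PP.eval t) (Set.Icc a b) b
      = ∑ k ∈ Finset.Ico 1 s, w1 k := by
    have e1 : ∀ k ∈ Finset.range s,
        (-1:ℝ)^k * w1 k * iteratedDerivWithin k (fun t => PP.eval t) (Set.Icc a b) b
        = if 1 ≤ k then w1 k else 0 := by
      intro k hk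
      rw [Finset.mem_range] at hk
      rw [iterWithin hab PP k b hbI, iter_eval_taylor, hcb k hk]
      split_ifs with h1
      · have hm1 : (-1:ℝ)^k * (-1:ℝ)^k = 1 := by
          rw [← pow_add]
          exact Even.neg_one_pow ⟨k, by ring⟩
        rw [mul_comm ((k.factorial:ℝ)) _, div_mul_cancel₀ _ (hfkne k)]
        calc (-1:ℝ)^k * w1 k * (-1:ℝ)^k = w1 k * ((-1:ℝ)^k * (-1:ℝ)^k) := by ring
        _ = w1 k := by rw [hm1, mul_one]
      · simp
    rw [Finset.sum_congr rfl e1, ← Finset.sum_filter]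
    congr 1
    ext k
    simp only [Finset.mem_filter, Finset.mem_range, Finset.mem_Ico]
    omega
  have hSmid : 0 ≤ ∑ k ∈ Finset.range n, wi k * PP.eval (τ k) :=
    Finset.sum_nonneg fun k hk => by
      rw [Finset.mem_range] at hk
      have h1 : 0 ≤ PP.eval (τ k) := by
        rw [hevalPP]
        exact part1 (τ k) (Set.mem_Icc_of_Ioo (hτ k hk))
      exact mul_nonneg (hwi k hk) h1
  rw [hS0, hS2] at hqe
  have hint : ∫ t, ((∑ j ∈ Finset.Ico 1 r, (pA j).eval t)
      + ∑ j ∈ Finset.Ico 1 s, (-1:ℝ)^j * (pB j).eval t) ∂μ = ∫ t, PP.eval t ∂μ :=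
    integral_congr_ae (Filter.Eventually.of_forall fun t => (hevalPP t).symm)
  rw [hint]
  linarith [hSmid, hqe]
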